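/- Fix an integer n ≥ 1 and let ḡ₋, σ, F̄ be as defined. Then F̄ has no critical points in the region where F̄ ≥ 0: for every (s, t) ∈ ℝ², if ∂F̄/∂s(s,t) = 0 and ∂F̄/∂t(s,t) = 0, then F̄(s,t) < 0. -/

import Mathlib

/-- The flat end function `ḡ₋`: equal to `cos (4ns)` on `[π/2, π]` and to `1` otherwise. -/
noncomputable def gBarMinus (n : ℕ) (s : ℝ) : ℝ :=
  if Real.pi / 2 ≤ s ∧ s ≤ Real.pi then Real.cos (4 * n * s) else 1

/-- The flat interpolating function `F̄(s,t) = eᵗ·[(1 − σ(t))·ḡ₋(s) + σ(t)]`. -/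
noncomputable def Fbar (n : ℕ) (σ : ℝ → ℝ) (s t : ℝ) : ℝ :=
  Real.exp t * ((1 - σ t) * gBarMinus n s + σ t)

/-- A monotone function has nonnegative derivative (at points of differentiability). -/
lemma mono_hasDerivAt_nonneg {f : ℝ → ℝ} (hm : Monotone f) {d x : ℝ}
    (h : HasDerivAt f d x) : 0 ≤ d := by
  have h' : HasDerivWithinAt f d (Set.Ioi x) x := h.hasDerivWithinAt
  rw [hasDerivWithinAt_iff_tendsto_slope] at h'
  have hset : Set.Ioi x \ {x} = Set.Ioi x := by
    apply Set.diff_singleton_eq_self; simp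
  rw [hset] at h'
  refine ge_of_tendsto h' ?_
  filter_upwards [self_mem_nhdsWithin] with y hy
  have hxy : x < y := hy
  rw [slope_def_field]
  exact div_nonneg (sub_nonneg.mpr (hm hxy.le)) (sub_nonneg.mpr hxy.le)

lemma gBarMinus_le_one (n : ℕ) (s : ℝ) : gBarMinus n s ≤ 1 := by
  unfold gBarMinus
  split
  · exact Real.cos_le_one _
  · exact le_rfl

/-- The flat interpolating function `F̄` has no critical points in the region where
`F̄ ≥ 0`: if both partial derivatives of `F̄` vanish at `(s, t)`, then `F̄(s, t) < 0`. -/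
theorem Fbar_neg_of_critical (n : ℕ) (hn : 1 ≤ n) (σ : ℝ → ℝ)
    (hσ : ContDiff ℝ 1 σ) (hmono : Monotone σ)
    (hbd : ∀ t, 0 ≤ σ t ∧ σ t ≤ 1)
    (hpos : ∀ t, 0 < σ t → σ t < 1 → 0 < deriv σ t)
    (s t : ℝ)
    (hs : deriv (fun s' => Fbar n σ s' t) s = 0)
    (ht : deriv (fun t' => Fbar n σ s t') t = 0) :
    Fbar n σ s t < 0 := by
  set G := gBarMinus n s with hGdef
  have hσd : HasDerivAt σ (deriv σ t) t :=
    ((hσ.differentiable one_ne_zero) t).hasDerivAt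
  have hGle : G ≤ 1 := gBarMinus_le_one n s
  -- compute the t-derivative
  have hdt : HasDerivAt (fun t' => Fbar n σ s t')
      (Fbar n σ s t + Real.exp t * deriv σ t * (1 - G)) t := by
    have h1 : HasDerivAt (fun t' => Real.exp t' * ((1 - σ t') * G + σ t'))
        (Real.exp t * ((1 - σ t) * G + σ t) +
          Real.exp t * ((0 - deriv σ t) * G + deriv σ t)) t :=
      (Real.hasDerivAt_exp t).mul
        ((((hasDerivAt_const t (1:ℝ)).sub hσd).mul_const G).add hσd)
    have heq : (fun t' => Fbar n σ s t') = fun t' => Real.exp t' * ((1 - σ t') * G + σ t') := rfl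
    rw [heq]
    convert h1 using 1
    simp only [Fbar, ← hGdef]
    ring
  rw [hdt.deriv] at ht
  have hexp : (0:ℝ) < Real.exp t := Real.exp_pos t
  have hσ'nn : 0 ≤ deriv σ t := mono_hasDerivAt_nonneg hmono hσd
  by_cases hG1 : G = 1
  · exfalso
    have hF : Fbar n σ s t = Real.exp t := by
      simp only [Fbar, ← hGdef, hG1]; ring
    rw [hF, hG1] at ht
    nlinarith
  have hGlt : G < 1 := lt_of_le_of_ne hGle hG1
  rcases lt_or_eq_of_le hσ'nn with hσ'pos | hσ'zero
  · -- positive derivative of σ: done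
    have hq : 0 < Real.exp t * deriv σ t * (1 - G) :=
      mul_pos (mul_pos hexp hσ'pos) (by linarith)
    linarith
  · -- deriv σ t = 0, so Fbar = 0; derive a contradiction
    exfalso
    rw [← hσ'zero] at ht
    have hF0 : Fbar n σ s t = 0 := by linarith
    have hval : (1 - σ t) * G + σ t = 0 := by
      have := hF0
      simp only [Fbar, ← hGdef] at this
      rcases mul_eq_zero.mp this with h | h
      · exact absurd h (ne_of_gt hexp)
      · exact h
    have hσle : σ t ≤ 1 := (hbd t).2
    have hσge : 0 ≤ σ t := (hbd t).1
    have hσlt : σ t < 1 := by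
      rcases lt_or_eq_of_le hσle with h | h
      · exact h
      · exfalso; rw [h] at hval; norm_num at hval
    have hσ0 : σ t = 0 := by
      rcases lt_or_eq_of_le hσge with h | h
      · exact absurd (hpos t h hσlt) (by rw [← hσ'zero]; exact lt_irrefl 0)
      · exact h.symm
    rw [hσ0] at hval
    have hG0 : G = 0 := by linarith [hval]
    -- G = 0 means s is strictly inside (π/2, π) and cos (4ns) = 0
    have hmem : Real.pi / 2 ≤ s ∧ s ≤ Real.pi := by
      by_contra hmem
      have : G = 1 := by simp only [hGdef, gBarMinus, if_neg hmem]
      exact hG1 this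
    have hGcos : G = Real.cos (4 * n * s) := by
      simp only [hGdef, gBarMinus, if_pos hmem]
    have hcos0 : Real.cos (4 * n * s) = 0 := by rw [← hGcos]; exact hG0
    have hlt1 : Real.pi / 2 < s := by
      rcases lt_or_eq_of_le hmem.1 with h | h
      · exact h
      · exfalso
        have : Real.cos (4 * n * s) = 1 := by
          rw [← h]
          have : (4 : ℝ) * n * (Real.pi / 2) = (n : ℝ) * (2 * Real.pi) := by ring
          rw [this]
          exact Real.cos_nat_mul_two_pi n
        rw [this] at hcos0; norm_num at hcos0
    have hlt2 : s < Real.pi := by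
      rcases lt_or_eq_of_le hmem.2 with h | h
      · exact h
      · exfalso
        have : Real.cos (4 * n * s) = 1 := by
          rw [h]
          have h2 : (4 : ℝ) * n * Real.pi = ((2 * n : ℕ) : ℝ) * (2 * Real.pi) := by
            push_cast; ring
          rw [h2]
          exact Real.cos_nat_mul_two_pi (2 * n)
        rw [this] at hcos0; norm_num at hcos0
    -- compute the s-derivative near s
    have hcosd : HasDerivAt (fun x : ℝ => Real.cos (4 * n * x))
        (-Real.sin (4 * n * s) * ((4 * n) * 1)) s :=
      (Real.hasDerivAt_cos ((4 : ℝ) * n * s)).comp s ((hasDerivAt_id s).const_mul ((4 : ℝ) * n))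
    have hfull : HasDerivAt (fun x : ℝ => Real.exp t * ((1 - σ t) * Real.cos (4 * n * x) + σ t))
        (Real.exp t * ((1 - σ t) * (-Real.sin (4 * n * s) * ((4 * n) * 1)) + 0)) s :=
      (((hcosd.const_mul (1 - σ t)).add_const (σ t)).const_mul (Real.exp t)).congr_deriv
        (by ring)
    have hev : (fun s' => Fbar n σ s' t) =ᶠ[nhds s]
        (fun x : ℝ => Real.exp t * ((1 - σ t) * Real.cos (4 * n * x) + σ t)) := by
      have hopen : Set.Ioo (Real.pi / 2) Real.pi ∈ nhds s :=
        isOpen_Ioo.mem_nhds ⟨hlt1, hlt2⟩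
      filter_upwards [hopen] with x hx
      have hxm : Real.pi / 2 ≤ x ∧ x ≤ Real.pi := ⟨hx.1.le, hx.2.le⟩
      simp only [Fbar, gBarMinus, if_pos hxm]
    have hds : HasDerivAt (fun s' => Fbar n σ s' t)
        (Real.exp t * ((1 - σ t) * (-Real.sin (4 * n * s) * ((4 * n) * 1)) + 0)) s :=
      hfull.congr_of_eventuallyEq hev
    rw [hds.deriv, hσ0] at hs
    have hn1 : (1:ℝ) ≤ (n:ℝ) := by exact_mod_cast hn
    have hs' : (1 - (0:ℝ)) * (-Real.sin (4 * n * s) * ((4 * n) * 1)) + 0 = 0 := by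
      rcases mul_eq_zero.mp hs with h | h
      · exact absurd h hexp.ne'
      · exact h
    have hs'' : Real.sin (4 * n * s) * (4 * n) = 0 := by linarith
    have hsin0 : Real.sin (4 * n * s) = 0 := by
      rcases mul_eq_zero.mp hs'' with h | h
      · exact h
      · exfalso; linarith
    have := Real.sin_sq_add_cos_sq (4 * n * s)
    rw [hsin0, hcos0] at this
    norm_num at this
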